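/- In the soft outer nodes setting, for every R ⊆ [m] the total prioritization weight satisfies the identity ‖F_0(R)‖ = Σ_{j=1}^m U_j(R) = Σ_{g=1}^G (−log(S_g(R)/G))/S_g(R), where the summand for gene g is taken to be 0 when S_g(R) = ∞ (i.e., when no discovered node contains g). -/

import Mathlib

open Finset

/-- `S_g(R)`: the minimum size of a discovered node containing gene `g`
(`⊤` if no node in `R` contains `g`). -/
def Sg {m G : ℕ} (𝒢 : Fin m → Finset (Fin G)) (R : Finset (Fin m)) (g : Fin G) : WithTop ℕ :=
  ((R.filter (fun j => g ∈ 𝒢 j)).image (fun j => (𝒢 j).card)).min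

/-- `R^g`: the discovered nodes containing gene `g` whose gene set attains the minimum size
`S_g(R)` (empty if no node in `R` contains `g`). -/
def Rg {m G : ℕ} (𝒢 : Fin m → Finset (Fin G)) (R : Finset (Fin m)) (g : Fin G) :
    Finset (Fin m) :=
  R.filter (fun j => g ∈ 𝒢 j ∧ ((𝒢 j).card : WithTop ℕ) = Sg 𝒢 R g)

/-- The soft outer nodes prioritization weight of node `j` given rejection set `R`:
`U_j(R) = -log(|𝒢_j|/G) · (Σ_{g ∈ 𝒢_j} 𝟙(j ∈ R^g)/|R^g|)/|𝒢_j|` for `j ∈ R`, else `0`. -/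
noncomputable def softU {m G : ℕ} (𝒢 : Fin m → Finset (Fin G)) (R : Finset (Fin m))
    (j : Fin m) : ℝ :=
  if j ∈ R then
    (- Real.log (((𝒢 j).card : ℝ) / (G : ℝ))) *
      ((∑ g ∈ 𝒢 j, if j ∈ Rg 𝒢 R g then (1 : ℝ) / ((Rg 𝒢 R g).card : ℝ) else 0) /
        ((𝒢 j).card : ℝ))
  else 0

/-- Total soft outer nodes weight `‖F_0(R)‖ = Σ_j U_j(R)`. -/
noncomputable def softNorm {m G : ℕ} (𝒢 : Fin m → Finset (Fin G))
    (R : Finset (Fin m)) : ℝ :=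
  ∑ j, softU 𝒢 R j

/-- The per-gene contribution `(-log(s/G))/s`, taken to be `0` when `s = ⊤`. -/
noncomputable def geneTerm (G : ℕ) (s : WithTop ℕ) : ℝ :=
  WithTop.recTopCoe 0 (fun n : ℕ => (- Real.log ((n : ℝ) / (G : ℝ))) / (n : ℝ)) s

/-- **Gene-wise decomposition of the soft outer nodes weight.**
In the soft outer nodes setting, for every `R ⊆ [m]`,
`‖F_0(R)‖ = Σ_j U_j(R) = Σ_g (-log(S_g(R)/G))/S_g(R)`, where the summand for gene `g` is `0`
when `S_g(R) = ⊤` (no discovered node contains `g`). -/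
lemma softU_eq_sum {m G : ℕ} (𝒢 : Fin m → Finset (Fin G)) (R : Finset (Fin m)) (j : Fin m) :
    softU 𝒢 R j = ∑ g : Fin G,
      if j ∈ Rg 𝒢 R g then
        (- Real.log (((𝒢 j).card : ℝ) / (G : ℝ))) / (((Rg 𝒢 R g).card : ℝ) * ((𝒢 j).card : ℝ))
      else 0 := by
  unfold softU
  by_cases hj : j ∈ R
  · simp only [hj, if_true]
    rw [Finset.sum_subset (Finset.subset_univ (𝒢 j))]
    · rw [Finset.sum_div, Finset.mul_sum]
      refine Finset.sum_congr rfl fun g _ => ?_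
      by_cases h : j ∈ Rg 𝒢 R g <;> simp [h] <;> ring
    · intro g _ hg
      have : j ∉ Rg 𝒢 R g := by
        simp only [Rg, Finset.mem_filter]
        rintro ⟨-, hg', -⟩
        exact hg hg'
      simp [this]
  · simp only [hj, if_false]
    symm
    refine Finset.sum_eq_zero fun g _ => ?_
    have : j ∉ Rg 𝒢 R g := by
      simp only [Rg, Finset.mem_filter]
      rintro ⟨h, -⟩
      exact hj h
    simp [this]

theorem softNorm_eq_sum_geneTerm
    {m G : ℕ} (𝒢 : Fin m → Finset (Fin G)) (h𝒢 : ∀ j, (𝒢 j).Nonempty)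
    (R : Finset (Fin m)) :
    softNorm 𝒢 R = ∑ g : Fin G, geneTerm G (Sg 𝒢 R g) := by
  unfold softNorm
  simp_rw [softU_eq_sum 𝒢 R]
  rw [Finset.sum_comm]
  refine Finset.sum_congr rfl fun g _ => ?_
  rw [← Finset.sum_filter]
  have hfilter : (Finset.univ.filter (fun j => j ∈ Rg 𝒢 R g)) = Rg 𝒢 R g := by
    ext j; simp
  rw [hfilter]
  rcases hs : Sg 𝒢 R g with _ | n
  · -- Sg = ⊤ : Rg empty
    have hempty : Rg 𝒢 R g = ∅ := by
      ext j
      simp only [Rg, Finset.mem_filter, Finset.notMem_empty, iff_false]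
      rintro ⟨hjR, hjg, hcard⟩
      rw [hs] at hcard
      exact (WithTop.coe_ne_top hcard)
    simp only [hempty, Finset.sum_empty]
    rfl
  · -- Sg = n
    have hne : (Rg 𝒢 R g).Nonempty := by
      have : n ∈ ((R.filter (fun j => g ∈ 𝒢 j)).image (fun j => (𝒢 j).card)) :=
        Finset.mem_of_min hs
      obtain ⟨j, hj, hjn⟩ := Finset.mem_image.mp this
      obtain ⟨hjR, hjg⟩ := Finset.mem_filter.mp hj
      exact ⟨j, Finset.mem_filter.mpr ⟨hjR, hjg, by rw [hs, ← hjn]; rfl⟩⟩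
    have hcard : ∀ j ∈ Rg 𝒢 R g, (𝒢 j).card = n := by
      intro j hj
      obtain ⟨-, -, hc⟩ := Finset.mem_filter.mp hj
      rw [hs] at hc
      exact WithTop.coe_inj.mp hc
    rw [Finset.sum_congr rfl (fun j hj => by rw [hcard j hj])]
    rw [Finset.sum_const, nsmul_eq_mul]
    have hRg : ((Rg 𝒢 R g).card : ℝ) ≠ 0 := by
      exact_mod_cast Finset.card_ne_zero_of_mem hne.choose_spec
    have hn : (n : ℝ) ≠ 0 := by
      obtain ⟨j, hj⟩ := hne
      have := hcard j hj
      have hpos : 0 < (𝒢 j).card := Finset.card_pos.mpr (h𝒢 j)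
      have : n ≠ 0 := by omega
      exact_mod_cast this
    have hgt : geneTerm G (some n) = - Real.log ((n : ℝ) / (G : ℝ)) / (n : ℝ) := rfl
    rw [hgt]
    field_simp
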